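/- Let g ∈ F_q[X] be monic irreducible of degree n with a root β ∈ F_{q^n} of multiplicative order e, let t = (q^n − 1)/e, and let α be a generator of F_{q^n}^× with α^t = β. For 0 ≤ k < t define the sequence u_k : ℕ → F_q by u_k(j) = Tr_{F_{q^n}/F_q}(α^{k + t·j}). Then each u_k belongs to Ω(g), is nonzero with least period e, the sequences u_0, …, u_{t−1} are pairwise shift inequivalent, and every nonzero sequence in Ω(g) is shift equivalent to exactly one u_k. In particular Ω(g) is the disjoint union of {0} and the t shift-equivalence classes [u_0], …, [u_{t−1}]. -/

import Mathlib

open Polynomial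

/-- The (left) shift operator `L` on sequences over `F`, as an `F`-linear endomorphism. -/
def shiftL (F : Type*) [CommSemiring F] : Module.End F (ℕ → F) where
  toFun s := fun i => s (i + 1)
  map_add' _ _ := rfl
  map_smul' _ _ := rfl

/-- For a polynomial `f`, the operator `f(L)` on sequences. -/
noncomputable def polyL {F : Type*} [CommSemiring F] (f : Polynomial F) :
    Module.End F (ℕ → F) :=
  Polynomial.aeval (shiftL F) f

/-- `Ω(f)`: the set of sequences annihilated by `f(L)`. -/
def OmegaSet {F : Type*} [CommSemiring F] (f : Polynomial F) : Set (ℕ → F) :=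
  {s | polyL f s = 0}

/-- Two sequences are shift equivalent if one is a shift of the other. -/
def ShiftEquiv {F : Type*} [CommSemiring F] (s s' : ℕ → F) : Prop :=
  ∃ ℓ : ℕ, s' = (shiftL F ^ ℓ) s

/-- The cycle (shift-equivalence class) of a sequence. -/
def seqCycle {F : Type*} [CommSemiring F] (s : ℕ → F) : Set (ℕ → F) :=
  {s' | ∃ ℓ : ℕ, s' = (shiftL F ^ ℓ) s}

/-- `N` is the least period of the sequence `s`. -/
def IsLeastPeriod {F : Type*} (s : ℕ → F) (N : ℕ) : Prop :=
  0 < N ∧ (∀ i, s (i + N) = s i) ∧ ∀ M : ℕ, 0 < M → (∀ i, s (i + M) = s i) → N ≤ M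

/-- `h` is the minimal polynomial of the sequence `s`: it is monic, annihilates `s`,
and divides every polynomial annihilating `s`. -/
def IsMinPolyOfSeq {F : Type*} [CommSemiring F] (s : ℕ → F) (h : Polynomial F) : Prop :=
  h.Monic ∧ polyL h s = 0 ∧ ∀ h' : Polynomial F, polyL h' s = 0 → h ∣ h'

/-- `e = ord(f)`: the least `N ≥ 1` with `f ∣ X^N - 1`. -/
def IsOrderOf {F : Type*} [CommRing F] (f : Polynomial F) (e : ℕ) : Prop :=
  0 < e ∧ f ∣ X ^ e - 1 ∧ ∀ N : ℕ, 0 < N → f ∣ X ^ N - 1 → e ≤ N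

theorem shiftL_pow_apply {F : Type*} [CommSemiring F] (ℓ : ℕ) (s : ℕ → F) (j : ℕ) :
    ((shiftL F ^ ℓ) s) j = s (j + ℓ) := by
  induction ℓ generalizing s j with
  | zero => rfl
  | succ m ih =>
      rw [pow_succ, Module.End.mul_apply, ih]
      rfl

theorem polyL_apply {F : Type*} [CommSemiring F] (f : Polynomial F) (s : ℕ → F) (j : ℕ) :
    polyL f s j = ∑ i ∈ Finset.range (f.natDegree + 1), f.coeff i • s (j + i) := by
  unfold polyL
  rw [Polynomial.aeval_eq_sum_range]
  simp only [LinearMap.coe_sum, Finset.sum_apply, LinearMap.smul_apply, Pi.smul_apply,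
    shiftL_pow_apply]

/-- with `u_k(j) = Tr(α^{k+tj})`, each `u_k` is a nonzero sequence of
`Ω(g)` with least period `e`, the `u_k` (`0 ≤ k < t`) are pairwise shift inequivalent,
and every nonzero sequence of `Ω(g)` is shift equivalent to exactly one `u_k`. -/
theorem stmt4 {F E : Type*} [Field F] [Fintype F] [Field E] [Fintype E] [Algebra F E]
    (n : ℕ) (hn : 0 < n) (hcard : Fintype.card E = Fintype.card F ^ n)
    (g : Polynomial F) (hmonic : g.Monic) (hirr : Irreducible g) (hdeg : g.natDegree = n)
    (β : Eˣ) (hroot : Polynomial.aeval (β : E) g = 0)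
    (e : ℕ) (he : e = orderOf β)
    (t : ℕ) (ht : t = (Fintype.card F ^ n - 1) / e)
    (α : Eˣ) (hα : orderOf α = Fintype.card F ^ n - 1) (hαβ : α ^ t = β)
    (u : ℕ → (ℕ → F))
    (hu : ∀ k j, u k j = Algebra.trace F E ((α : E) ^ (k + t * j))) :
    (∀ k < t, u k ∈ OmegaSet g ∧ u k ≠ 0 ∧ IsLeastPeriod (u k) e) ∧
    (∀ k < t, ∀ k' < t, k ≠ k' → ¬ ShiftEquiv (u k) (u k')) ∧
    (∀ s ∈ OmegaSet g, s ≠ 0 → ∃! k : ℕ, k < t ∧ ShiftEquiv (u k) s) := by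
  classical
  have hq2 : 1 < Fintype.card F := Fintype.one_lt_card
  have hmin : g = minpoly F (β : E) := minpoly.eq_of_irreducible_of_monic hirr hroot hmonic
  have hfr : Module.finrank F E = n := by
    apply Nat.pow_right_injective hq2
    show Fintype.card F ^ Module.finrank F E = Fintype.card F ^ n
    rw [← Module.card_eq_pow_finrank (K := F) (V := E), hcard]
  have hnd : (minpoly F (β : E)).natDegree = n := by rw [← hmin, hdeg]
  have hli : LinearIndependent F (fun i : Fin n => (β : E) ^ (i : ℕ)) := by
    have h := linearIndependent_pow (K := F) (β : E)
    rw [hnd] at h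
    exact h
  haveI : Nonempty (Fin n) := ⟨⟨0, hn⟩⟩
  set b : Module.Basis (Fin n) F E :=
    basisOfLinearIndependentOfCardEqFinrank hli (by rw [Fintype.card_fin, hfr]) with hbdef
  have hb : ∀ i : Fin n, b i = (β : E) ^ (i : ℕ) := by
    intro i
    rw [hbdef, coe_basisOfLinearIndependentOfCardEqFinrank]
  -- key injectivity
  have key : ∀ c : E, (∀ j : ℕ, Algebra.trace F E (c * (β : E) ^ j) = 0) → c = 0 := by
    intro c hc
    apply (traceForm_nondegenerate F E).1 c
    intro x
    have hzero : Algebra.traceForm F E c = 0 := by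
      apply b.ext
      intro i
      rw [hb i]
      simpa [Algebra.traceForm_apply] using hc i
    rw [hzero]
    rfl
  set v : E → (ℕ → F) := fun c j => Algebra.trace F E (c * (β : E) ^ j) with hvdef
  have hvinj : ∀ c c', v c = v c' → c = c' := by
    intro c c' h
    have h2 : c - c' = 0 := by
      apply key
      intro j
      have h3 := congrFun h j
      simp only [hvdef] at h3
      rw [sub_mul, map_sub, h3, sub_self]
    exact sub_eq_zero.mp h2
  have hvmem : ∀ c : E, v c ∈ OmegaSet g := by
    intro c
    show polyL g (v c) = 0
    funext m
    rw [polyL_apply]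
    show ∑ i ∈ Finset.range (g.natDegree + 1), g.coeff i •
        Algebra.trace F E (c * (β : E) ^ (m + i)) = 0
    have hstep : ∀ i ∈ Finset.range (g.natDegree + 1),
        g.coeff i • Algebra.trace F E (c * (β : E) ^ (m + i)) =
          Algebra.trace F E ((c * (β : E) ^ m) * (g.coeff i • (β : E) ^ i)) := by
      intro i _
      rw [mul_smul_comm, map_smul, pow_add, mul_assoc]
    rw [Finset.sum_congr rfl hstep, ← map_sum, ← Finset.mul_sum,
      ← Polynomial.aeval_eq_sum_range, hroot, mul_zero, map_zero]
  -- group-theoretic facts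
  have hepos : 0 < e := he ▸ orderOf_pos β
  have hcardU : Fintype.card Eˣ = Fintype.card F ^ n - 1 := by
    rw [Fintype.card_units, hcard]
  have hedvd : e ∣ Fintype.card F ^ n - 1 := by
    rw [he, ← hcardU]
    exact orderOf_dvd_card
  have hte : t * e = Fintype.card F ^ n - 1 := by
    rw [ht]; exact Nat.div_mul_cancel hedvd
  have hpow1 : 1 < Fintype.card F ^ n := Nat.one_lt_pow hn.ne' hq2
  have htpos : 0 < t := by
    rcases Nat.eq_zero_or_pos t with h | h
    · exfalso
      rw [h, zero_mul] at hte
      omega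
    · exact h
  have hβe : (β : E) ^ e = 1 := by
    rw [← Units.val_pow_eq_pow_val, he, pow_orderOf_eq_one, Units.val_one]
  have hβα : ((α : E)) ^ t = (β : E) := by
    rw [← Units.val_pow_eq_pow_val, hαβ]
  have hαpow : ∀ k ℓ : ℕ, (α : E) ^ k * (β : E) ^ ℓ = (α : E) ^ (k + t * ℓ) := by
    intro k ℓ
    rw [pow_add, pow_mul, hβα]
  have huv : ∀ k : ℕ, u k = v ((α : E) ^ k) := by
    intro k
    funext j
    rw [hu k j, hvdef]
    show Algebra.trace F E ((α : E) ^ (k + t * j)) = Algebra.trace F E ((α : E) ^ k * (β : E) ^ j)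
    rw [hαpow]
  have hshift : ∀ (c : E) (ℓ : ℕ), (shiftL F ^ ℓ) (v c) = v (c * (β : E) ^ ℓ) := by
    intro c ℓ
    funext j
    rw [shiftL_pow_apply]
    show Algebra.trace F E (c * (β : E) ^ (j + ℓ)) = Algebra.trace F E (c * (β : E) ^ ℓ * (β : E) ^ j)
    rw [pow_add, mul_assoc, mul_comm ((β : E) ^ j)]
  have hexp : ∀ a c : ℕ, (α : E) ^ a = (α : E) ^ c → a % (t * e) = c % (t * e) := by
    intro a c h
    have hu2 : α ^ a = α ^ c := Units.ext (by
      rw [Units.val_pow_eq_pow_val, Units.val_pow_eq_pow_val]; exact h)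
    have := pow_eq_pow_iff_modEq.mp hu2
    rw [hα, ← hte] at this
    exact this
  have hkuniq : ∀ k k' a c : ℕ, k < t → k' < t →
      (α : E) ^ (k + t * a) = (α : E) ^ (k' + t * c) → k = k' := by
    intro k k' a c hklt hk'lt h
    have h1 : (k + t * a) % t = (k' + t * c) % t :=
      Nat.ModEq.of_dvd ⟨e, rfl⟩ (hexp _ _ h)
    rwa [Nat.add_mul_mod_self_left, Nat.add_mul_mod_self_left,
      Nat.mod_eq_of_lt hklt, Nat.mod_eq_of_lt hk'lt] at h1
  -- sequences in Omega are determined by first n values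
  have hzero : ∀ s ∈ OmegaSet g, (∀ i : Fin n, s i = 0) → s = 0 := by
    intro s hs h0
    have hz : ∀ j, s j = 0 := by
      intro j
      induction j using Nat.strong_induction_on with
      | _ j ih =>
        by_cases hj : j < n
        · exact h0 ⟨j, hj⟩
        · push_neg at hj
          obtain ⟨m, rfl⟩ := Nat.exists_eq_add_of_le hj
          have heq := congrFun (hs : polyL g s = 0) m
          rw [polyL_apply, hdeg] at heq
          rw [Finset.sum_range_succ] at heq
          have hcn : g.coeff n = 1 := by rw [← hdeg]; exact hmonic.coeff_natDegree
          rw [hcn, one_smul] at heq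
          have hsum : ∑ i ∈ Finset.range n, g.coeff i • s (m + i) = 0 := by
            apply Finset.sum_eq_zero
            intro i hi
            rw [ih (m + i) (by simp at hi; omega), smul_zero]
          have : s (m + n) = 0 := by
            have := heq
            simp only [Pi.zero_apply] at this
            rw [hsum, zero_add] at this
            exact this
          rw [Nat.add_comm n m]
          exact this
    funext j
    exact hz j
  -- counting: v is surjective onto OmegaSet g
  have hsurj : ∀ s ∈ OmegaSet g, ∃ c : E, v c = s := by
    intro s hs
    have hrinj : Function.Injective (fun s : ↥(OmegaSet g) => fun i : Fin n => s.1 i) := by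
      intro s₁ s₂ h
      apply Subtype.ext
      have hmem : s₁.1 - s₂.1 ∈ OmegaSet g := by
        show polyL g (s₁.1 - s₂.1) = 0
        rw [map_sub, (s₁.2 : polyL g s₁.1 = 0), (s₂.2 : polyL g s₂.1 = 0), sub_self]
      have h4 := hzero _ hmem (fun i => by
        have := congrFun h i
        simp only [] at this
        show s₁.1 i - s₂.1 i = 0
        rw [this, sub_self])
      exact sub_eq_zero.mp h4
    have hφinj : Function.Injective (fun c : E => (⟨v c, hvmem c⟩ : ↥(OmegaSet g))) := by
      intro c c' h
      exact hvinj c c' (congrArg Subtype.val h)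
    haveI : Finite ↥(OmegaSet g) :=
      Finite.of_injective _ hrinj
    haveI : Fintype ↥(OmegaSet g) := Fintype.ofFinite _
    have hc1 : Fintype.card ↥(OmegaSet g) ≤ Fintype.card F ^ n := by
      have := Fintype.card_le_of_injective _ hrinj
      rwa [Fintype.card_fun, Fintype.card_fin] at this
    have hc2 : Fintype.card E ≤ Fintype.card ↥(OmegaSet g) :=
      Fintype.card_le_of_injective _ hφinj
    have hceq : Fintype.card E = Fintype.card ↥(OmegaSet g) := by omega
    have hφbij := (Fintype.bijective_iff_injective_and_card _).mpr ⟨hφinj, hceq⟩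
    obtain ⟨c, hc⟩ := hφbij.surjective ⟨s, hs⟩
    exact ⟨c, congrArg Subtype.val hc⟩
  -- main least-period fact
  have hlp : ∀ c : E, c ≠ 0 → IsLeastPeriod (v c) e := by
    intro c hc
    refine ⟨hepos, fun i => ?_, fun M hM hMper => ?_⟩
    · show Algebra.trace F E (c * (β : E) ^ (i + e)) = Algebra.trace F E (c * (β : E) ^ i)
      rw [pow_add, hβe, mul_one]
    · have hβM : (β : E) ^ M = 1 := by
        have h0 : c * ((β : E) ^ M - 1) = 0 := by
          apply key
          intro j
          have := hMper j
          simp only [hvdef] at this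
          have hrw : c * ((β : E) ^ M - 1) * (β : E) ^ j
              = c * (β : E) ^ (j + M) - c * (β : E) ^ j := by ring
          show Algebra.trace F E (c * ((β : E) ^ M - 1) * (β : E) ^ j) = 0
          rw [hrw, map_sub, this, sub_self]
        rcases mul_eq_zero.mp h0 with h | h
        · exact absurd h hc
        · have := sub_eq_zero.mp h
          exact this
      have hβMu : β ^ M = 1 := Units.val_eq_one.mp (by
        rw [Units.val_pow_eq_pow_val]; exact hβM)
      have : e ∣ M := he ▸ orderOf_dvd_of_pow_eq_one hβMu
      exact Nat.le_of_dvd hM this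
  refine ⟨?_, ?_, ?_⟩
  · intro k _
    refine ⟨huv k ▸ hvmem _, ?_, huv k ▸ hlp _ (pow_ne_zero k α.ne_zero)⟩
    intro h0
    have : ((α : E) ^ k) = 0 := hvinj _ 0 (by
      rw [← huv k, h0]
      funext j
      show (0 : F) = Algebra.trace F E (0 * (β : E) ^ j)
      rw [zero_mul, map_zero])
    exact pow_ne_zero k α.ne_zero this
  · rintro k hk k' hk' hne ⟨ℓ, hℓ⟩
    apply hne
    rw [huv k, huv k', hshift, hαpow] at hℓ
    have := hvinj _ _ hℓ
    exact (hkuniq k' k 0 ℓ hk' hk (by rw [Nat.mul_zero, Nat.add_zero]; exact this)).symm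
  · intro s hs hsne
    obtain ⟨c, hc⟩ := hsurj s hs
    have hcne : c ≠ 0 := by
      intro h0
      apply hsne
      rw [← hc, h0]
      funext j
      show Algebra.trace F E (0 * (β : E) ^ j) = (0 : F)
      rw [zero_mul, map_zero]
    -- write c as a power of α
    have hzt : Subgroup.zpowers α = ⊤ := by
      apply Subgroup.eq_top_of_card_eq
      rw [Nat.card_zpowers, hα, Nat.card_eq_fintype_card, hcardU]
    have hmem : Units.mk0 c hcne ∈ Submonoid.powers α := by
      rw [mem_powers_iff_mem_zpowers, hzt]
      trivial
    obtain ⟨r, hr⟩ := hmem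
    have hrc : (α : E) ^ r = c := by
      have hr' : α ^ r = Units.mk0 c hcne := hr
      rw [← Units.val_pow_eq_pow_val, hr', Units.val_mk0]
    have hse : ∀ k a : ℕ, (shiftL F ^ a) (u k) = v ((α : E) ^ (k + t * a)) := by
      intro k a
      rw [huv k, hshift, hαpow]
    have hkey : ShiftEquiv (u (r % t)) s := by
      refine ⟨r / t, ?_⟩
      rw [hse, Nat.mod_add_div, hrc, hc]
    refine ⟨r % t, ⟨Nat.mod_lt r htpos, hkey⟩, ?_⟩
    rintro k' ⟨hk't, ⟨a, ha⟩⟩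
    rw [hse] at ha
    have h2 : v ((α : E) ^ (k' + t * a)) = v ((α : E) ^ (r % t + t * (r / t))) := by
      rw [Nat.mod_add_div, hrc, hc, ha]
    exact hkuniq k' (r % t) a (r / t) hk't (Nat.mod_lt r htpos) (hvinj _ _ h2)
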